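/- Let m ≥ 1, n ≥ 2. Let w₁, …, w_n > 0 and D ∈ ℝ^{n×n} with D·𝟙 = 0, and suppose Q = diag(w)·D satisfies Q + Qᵀ = B, where B₁₁ = −1, B_{nn} = 1, and B is otherwise zero. Let U : ℝ^m → ℝ be convex and differentiable, set v(y) = ∇U(y) and 𝒰(y) = v(y)ᵀy − U(y). Let F : ℝ^m × ℝ^m → ℝ^m be symmetric, consistent (F(y,y) = y), and entropy-conservative: (v(b) − v(a))ᵀF(a,b) = 𝒰(b) − 𝒰(a) for all a, b. Let S : ℝ^m → ℝ^m satisfy v(y)ᵀ S(y) ≤ 0 for all y, let h > 0, and let y₀, y₁, …, y_n ∈ ℝ^m satisfy, for each i = 1, …, n: w_i ( 2 Σ_{j=1}^n D_{ij} F(y_i, y_j) − h S(y_i) ) + δ_{i1} ( y₁ − y₀ ) = 0, where δ_{i1} is 1 if i = 1 and 0 otherwise. Then U(y_n) ≤ U(y₀). -/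

import Mathlib

open Filter Set Topology

lemma convex_grad_ineq {m : ℕ} (U : (Fin m → ℝ) → ℝ)
    (hU : ConvexOn ℝ Set.univ U) (hdiff : Differentiable ℝ U)
    (a x : Fin m → ℝ) :
    U a + fderiv ℝ U a (x - a) ≤ U x := by
  set d : Fin m → ℝ := x - a with hd
  set φ : ℝ → ℝ := fun t => U (a + t • d) with hφ
  have hline : HasDerivAt (fun t : ℝ => a + t • d) d 0 := by
    simpa using ((hasDerivAt_id (0:ℝ)).smul_const d).const_add a
  have hderiv : HasDerivAt φ (fderiv ℝ U a d) 0 := by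
    have := (hdiff (a + (0:ℝ) • d)).hasFDerivAt.comp_hasDerivAt 0 hline
    simp only [zero_smul, add_zero] at this; exact this
  have hkey : Tendsto (slope φ 0) (𝓝[>] 0) (𝓝 (fderiv ℝ U a d)) :=
    (hasDerivAt_iff_tendsto_slope.mp hderiv).mono_left
      (nhdsWithin_mono _ fun t ht => ne_of_gt ht)
  have hev : ∀ᶠ t in 𝓝[>] (0:ℝ), slope φ 0 t ≤ U x - U a := by
    filter_upwards [Ioc_mem_nhdsGT_of_mem (Set.left_mem_Ico.mpr one_pos)] with t ht
    obtain ⟨ht0, ht1⟩ := ht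
    have hc := hU.2 (Set.mem_univ a) (Set.mem_univ x)
      (by linarith : (0:ℝ) ≤ 1 - t) ht0.le (by ring)
    have heq : (1 - t) • a + t • x = a + t • d := by
      funext l; simp [hd, Pi.smul_apply]; ring
    rw [heq] at hc
    have hφt : φ t - φ 0 ≤ t * (U x - U a) := by
      have h0 : φ 0 = U a := by simp [hφ]
      have h1 : φ t ≤ (1 - t) * U a + t * U x := by simpa [hφ, smul_eq_mul] using hc
      rw [h0]; nlinarith
    have : slope φ 0 t = (φ t - φ 0) / t := by simp [slope_def_field]
    rw [this, div_le_iff₀ ht0]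
    linarith [hφt]
  have := le_of_tendsto hkey hev
  linarith

/-- Single-interval entropy-stability theorem for the entropy-stable DGODE
scheme (Section 6.3.2): for the temporal DG discretization of `dy/dt = S(y)`
with diagonal-norm SBP operators (`w_i > 0`, `D𝟙 = 0`, `Q + Qᵀ = B` for
`Q = diag(w)D`), a symmetric, consistent, entropy-conservative two-point
numerical state `F`, a source term with nonpositive entropy production
`v(y)ᵀS(y) ≤ 0`, and upwind coupling to the initial data `y₀` at the inflow
face, the convex entropy satisfies `U(y_n) ≤ U(y₀)`. -/
theorem entropy_stable_DGODE
    (m n : ℕ) (hm : 1 ≤ m) (hn : 2 ≤ n)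
    (w : Fin n → ℝ) (hw : ∀ i, 0 < w i)
    (Dmat : Matrix (Fin n) (Fin n) ℝ)
    (hD1 : Dmat.mulVec (fun _ => 1) = 0)
    (hSBP : (Matrix.diagonal w * Dmat) + (Matrix.diagonal w * Dmat).transpose =
      Matrix.of (fun (i j : Fin n) =>
        if i = j ∧ (i : ℕ) = 0 then (-1 : ℝ)
        else if i = j ∧ (i : ℕ) = n - 1 then 1 else 0))
    (U : (Fin m → ℝ) → ℝ) (hU : ConvexOn ℝ Set.univ U) (hdiff : Differentiable ℝ U)
    (v : (Fin m → ℝ) → (Fin m → ℝ))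
    (hv : ∀ y z, fderiv ℝ U y z = ∑ l, v y l * z l)
    (𝒰 : (Fin m → ℝ) → ℝ) (h𝒰 : ∀ y, 𝒰 y = (∑ l, v y l * y l) - U y)
    (F : (Fin m → ℝ) → (Fin m → ℝ) → (Fin m → ℝ))
    (hsymm : ∀ a b, F a b = F b a) (hcons : ∀ y, F y y = y)
    (hEC : ∀ a b, (∑ l, (v b l - v a l) * F a b l) = 𝒰 b - 𝒰 a)
    (S : (Fin m → ℝ) → (Fin m → ℝ))
    (hS : ∀ y, (∑ l, v y l * S y l) ≤ 0)
    (h : ℝ) (hh : 0 < h)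
    (y0 : Fin m → ℝ) (y : Fin n → (Fin m → ℝ))
    (hscheme : ∀ i, w i • ((2 : ℝ) • (∑ j, Dmat i j • F (y i) (y j)) - h • S (y i))
        + (if (i : ℕ) = 0 then y i - y0 else 0) = 0) :
    U (y ⟨n - 1, by omega⟩) ≤ U y0 := by
  have hn0 : 0 < n := by omega
  set i0 : Fin n := ⟨0, hn0⟩ with hi0def
  set iN : Fin n := ⟨n - 1, by omega⟩ with hiNdef
  have hi0N : i0 ≠ iN := by
    simp only [hi0def, hiNdef, Ne, Fin.mk.injEq]; omega
  -- B entries of the boundary matrix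
  have hB : ∀ i j : Fin n, w i * Dmat i j + w j * Dmat j i =
      (if i = j ∧ (i : ℕ) = 0 then (-1:ℝ) else if i = j ∧ (i:ℕ) = n - 1 then 1 else 0) := by
    intro i j
    have h1 := congrFun (congrFun hSBP i) j
    simp only [Matrix.add_apply, Matrix.transpose_apply, Matrix.diagonal_mul,
      Matrix.of_apply] at h1
    linear_combination h1
  -- row sums of Q vanish
  have hrow : ∀ i, ∑ j, w i * Dmat i j = 0 := by
    intro i
    have h1 := congrFun hD1 i
    simp only [Matrix.mulVec, dotProduct, mul_one, Pi.zero_apply] at h1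
    rw [← Finset.mul_sum, h1, mul_zero]
  -- column sums of Q are the boundary values
  have hcol : ∀ j, ∑ i, w i * Dmat i j =
      (if (j:ℕ) = 0 then (-1:ℝ) else if (j:ℕ) = n - 1 then 1 else 0) := by
    intro j
    have h1 : ∀ i : Fin n, w i * Dmat i j =
        (if i = j ∧ (i:ℕ)=0 then (-1:ℝ) else if i = j ∧ (i:ℕ)=n-1 then 1 else 0)
          - w j * Dmat j i := by
      intro i; rw [← hB i j]; ring
    rw [Finset.sum_congr rfl (fun i _ => h1 i), Finset.sum_sub_distrib, hrow j, sub_zero,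
      Finset.sum_eq_single j]
    · simp
    · intro i _ hij; simp [hij]
    · simp
  -- conditions as Fin equalities
  have hcond0 : ∀ i : Fin n, ((i:ℕ) = 0) = (i = i0) := by
    intro i; simp [hi0def, Fin.ext_iff]
  have hcondN : ∀ i : Fin n, ((i:ℕ) = n - 1) = (i = iN) := by
    intro i; simp [hiNdef, Fin.ext_iff]
  -- componentwise scheme
  have hcomp : ∀ i l, w i * (2 * (∑ j, Dmat i j * F (y i) (y j) l) - h * S (y i) l)
      + (if (i:ℕ) = 0 then y i l - y0 l else 0) = 0 := by
    intro i l
    have h1 := congrFun (hscheme i) l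
    simpa [Finset.sum_apply, Pi.smul_apply, smul_eq_mul, apply_ite (fun f : Fin m → ℝ => f l)]
      using h1
  -- per-node expansion of v ⬝ scheme
  have hexp : ∀ i : Fin n, (∑ l, v (y i) l *
      (w i * (2 * (∑ j, Dmat i j * F (y i) (y j) l) - h * S (y i) l)
        + (if (i:ℕ) = 0 then y i l - y0 l else 0)))
    = (∑ j, (2 * (w i * Dmat i j)) * (∑ l, v (y i) l * F (y i) (y j) l))
      - h * (w i * (∑ l, v (y i) l * S (y i) l))
      + (if i = i0 then (∑ l, v (y i) l * (y i l - y0 l)) else 0) := by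
    intro i
    simp only [hcond0]
    have e1 : ∀ l : Fin m, v (y i) l *
        (w i * (2 * (∑ j, Dmat i j * F (y i) (y j) l) - h * S (y i) l)
          + (if i = i0 then y i l - y0 l else 0))
      = (∑ j, (2 * (w i * Dmat i j)) * (v (y i) l * F (y i) (y j) l))
        - h * (w i * (v (y i) l * S (y i) l))
        + (if i = i0 then v (y i) l * (y i l - y0 l) else 0) := by
      intro l
      have hA : (∑ j, (2 * (w i * Dmat i j)) * (v (y i) l * F (y i) (y j) l))
          = v (y i) l * (w i * (2 * ∑ j, Dmat i j * F (y i) (y j) l)) := by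
        rw [Finset.mul_sum, Finset.mul_sum, Finset.mul_sum]
        exact Finset.sum_congr rfl fun j _ => by ring
      by_cases hii : i = i0
      · rw [if_pos hii, if_pos hii, hA]; ring
      · rw [if_neg hii, if_neg hii, hA]; ring
    rw [Finset.sum_congr rfl fun l _ => e1 l, Finset.sum_add_distrib, Finset.sum_sub_distrib]
    congr 1
    congr 1
    · rw [Finset.sum_comm]
      exact Finset.sum_congr rfl fun j _ => (Finset.mul_sum _ _ _).symm
    · simp only [Finset.mul_sum]
    · by_cases hii : i = i0 <;> simp [hii]
  -- global balance
  have hglobal :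
      (∑ i, ∑ j, (2 * (w i * Dmat i j)) * (∑ l, v (y i) l * F (y i) (y j) l))
        - (∑ i, h * (w i * (∑ l, v (y i) l * S (y i) l)))
        + (∑ l, v (y i0) l * (y i0 l - y0 l)) = 0 := by
    have hzero : (∑ i, ∑ l, v (y i) l *
        (w i * (2 * (∑ j, Dmat i j * F (y i) (y j) l) - h * S (y i) l)
          + (if (i:ℕ) = 0 then y i l - y0 l else 0))) = 0 :=
      Finset.sum_eq_zero fun i _ =>
        Finset.sum_eq_zero fun l _ => by rw [hcomp i l, mul_zero]
    rw [Finset.sum_congr rfl fun i _ => hexp i, Finset.sum_add_distrib,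
      Finset.sum_sub_distrib, Finset.sum_ite_eq' Finset.univ i0] at hzero
    simpa using hzero
  -- the flux-swap identity
  have hswap : (∑ i, ∑ j, (w i * Dmat i j) * (∑ l, v (y i) l * F (y i) (y j) l))
      = ∑ i, ∑ j, (w j * Dmat j i) * (∑ l, v (y j) l * F (y i) (y j) l) := by
    rw [Finset.sum_comm]
    exact Finset.sum_congr rfl fun i _ => Finset.sum_congr rfl fun j _ => by
      rw [hsymm (y j) (y i)]
  -- entropy-conservation pointwise
  have hGH : ∀ i j : Fin n, (∑ l, v (y j) l * F (y i) (y j) l)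
      = (∑ l, v (y i) l * F (y i) (y j) l) + (𝒰 (y j) - 𝒰 (y i)) := by
    intro i j
    have h1 := hEC (y i) (y j)
    have h2 : (∑ l, (v (y j) l - v (y i) l) * F (y i) (y j) l)
        = (∑ l, v (y j) l * F (y i) (y j) l) - (∑ l, v (y i) l * F (y i) (y j) l) := by
      rw [← Finset.sum_sub_distrib]
      exact Finset.sum_congr rfl fun l _ => by ring
    rw [h2] at h1
    linarith
  -- evaluate the flux term A
  have hA : (∑ i, ∑ j, (2 * (w i * Dmat i j)) * (∑ l, v (y i) l * F (y i) (y j) l))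
      = U (y iN) - U (y i0) := by
    have step1 : (∑ i, ∑ j, (2 * (w i * Dmat i j)) * (∑ l, v (y i) l * F (y i) (y j) l))
        = (∑ i, ∑ j, (w i * Dmat i j) * (∑ l, v (y i) l * F (y i) (y j) l))
          + (∑ i, ∑ j, (w j * Dmat j i) * (∑ l, v (y j) l * F (y i) (y j) l)) := by
      rw [← hswap, ← Finset.sum_add_distrib]
      refine Finset.sum_congr rfl fun i _ => ?_
      rw [← Finset.sum_add_distrib]
      exact Finset.sum_congr rfl fun j _ => by ring
    have step2 : ∀ i j : Fin n,
        (w i * Dmat i j) * (∑ l, v (y i) l * F (y i) (y j) l)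
          + (w j * Dmat j i) * (∑ l, v (y j) l * F (y i) (y j) l)
        = (w i * Dmat i j) * (𝒰 (y i) - 𝒰 (y j))
          + ((if i = j ∧ (i:ℕ)=0 then (-1:ℝ) else if i = j ∧ (i:ℕ)=n-1 then 1 else 0))
              * (∑ l, v (y j) l * F (y i) (y j) l) := by
      intro i j
      rw [← hB i j]
      linear_combination (-(w i * Dmat i j)) * (hGH i j)
    have step3 : (∑ i, ∑ j, (w i * Dmat i j) * (𝒰 (y i) - 𝒰 (y j)))
        = 𝒰 (y i0) - 𝒰 (y iN) := by
      have e1 : (∑ i, ∑ j, (w i * Dmat i j) * (𝒰 (y i) - 𝒰 (y j)))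
          = (∑ i, ∑ j, (w i * Dmat i j) * 𝒰 (y i))
            - (∑ i, ∑ j, (w i * Dmat i j) * 𝒰 (y j)) := by
        rw [← Finset.sum_sub_distrib]
        refine Finset.sum_congr rfl fun i _ => ?_
        rw [← Finset.sum_sub_distrib]
        exact Finset.sum_congr rfl fun j _ => by ring
      have e2 : (∑ i, ∑ j, (w i * Dmat i j) * 𝒰 (y i)) = 0 := by
        refine Finset.sum_eq_zero fun i _ => ?_
        rw [← Finset.sum_mul, hrow i, zero_mul]
      have e3 : (∑ i, ∑ j, (w i * Dmat i j) * 𝒰 (y j)) = 𝒰 (y iN) - 𝒰 (y i0) := by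
        rw [Finset.sum_comm]
        have e4 : ∀ j : Fin n, (∑ i, (w i * Dmat i j) * 𝒰 (y j))
            = (if j = iN then 𝒰 (y j) else 0) - (if j = i0 then 𝒰 (y j) else 0) := by
          intro j
          rw [← Finset.sum_mul, hcol j]
          by_cases hj0 : (j:ℕ) = 0
          · have hj0' : j = i0 := (hcond0 j) ▸ hj0
            have hne : ¬ (j = iN) := by rw [hj0']; exact hi0N
            rw [if_pos hj0, if_neg hne, if_pos hj0']
            ring
          · by_cases hjN : (j:ℕ) = n - 1
            · have hj' : j = iN := (hcondN j) ▸ hjN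
              have hne : ¬ (j = i0) := by rw [hj']; exact hi0N.symm
              rw [if_neg hj0, if_pos hjN, if_pos hj', if_neg hne]
              ring
            · have h1 : ¬ (j = iN) := fun hc => hjN ((hcondN j) ▸ hc)
              have h2 : ¬ (j = i0) := fun hc => hj0 ((hcond0 j) ▸ hc)
              rw [if_neg hj0, if_neg hjN, if_neg h1, if_neg h2]
              ring
        rw [Finset.sum_congr rfl fun j _ => e4 j, Finset.sum_sub_distrib,
          Finset.sum_ite_eq' Finset.univ iN, Finset.sum_ite_eq' Finset.univ i0]
        simp
      rw [e1, e2, e3]; ring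
    have step4 : (∑ i : Fin n, ∑ j : Fin n,
        ((if i = j ∧ (i:ℕ)=0 then (-1:ℝ) else if i = j ∧ (i:ℕ)=n-1 then 1 else 0))
          * (∑ l, v (y j) l * F (y i) (y j) l))
        = (∑ l, v (y iN) l * y iN l) - (∑ l, v (y i0) l * y i0 l) := by
      have e5 : ∀ i : Fin n, (∑ j : Fin n,
          ((if i = j ∧ (i:ℕ)=0 then (-1:ℝ) else if i = j ∧ (i:ℕ)=n-1 then 1 else 0))
            * (∑ l, v (y j) l * F (y i) (y j) l))
          = (if i = iN then (∑ l, v (y i) l * y i l) else 0)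
            - (if i = i0 then (∑ l, v (y i) l * y i l) else 0) := by
        intro i
        rw [Finset.sum_eq_single i]
        · simp only [eq_self_iff_true, true_and, hcons]
          by_cases hj0 : (i:ℕ) = 0
          · have heq : i = i0 := (hcond0 i) ▸ hj0
            have hne : ¬ (i = iN) := by rw [heq]; exact hi0N
            rw [if_pos hj0, if_neg hne, if_pos heq]
            ring
          · by_cases hjN : (i:ℕ) = n - 1
            · have heq : i = iN := (hcondN i) ▸ hjN
              have hne : ¬ (i = i0) := by rw [heq]; exact hi0N.symm
              rw [if_neg hj0, if_pos hjN, if_pos heq, if_neg hne]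
              ring
            · have h1 : ¬ (i = iN) := fun hc => hjN ((hcondN i) ▸ hc)
              have h2 : ¬ (i = i0) := fun hc => hj0 ((hcond0 i) ▸ hc)
              rw [if_neg hj0, if_neg hjN, if_neg h1, if_neg h2]
              ring
        · intro j _ hji
          have : ¬ (i = j) := fun hc => hji hc.symm
          simp [this]
        · simp
      rw [Finset.sum_congr rfl fun i _ => e5 i, Finset.sum_sub_distrib,
        Finset.sum_ite_eq' Finset.univ iN, Finset.sum_ite_eq' Finset.univ i0]
      simp
    calc (∑ i, ∑ j, (2 * (w i * Dmat i j)) * (∑ l, v (y i) l * F (y i) (y j) l))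
        = (∑ i : Fin n, ∑ j : Fin n, ((w i * Dmat i j) * (𝒰 (y i) - 𝒰 (y j))
            + ((if i = j ∧ (i:ℕ)=0 then (-1:ℝ) else if i = j ∧ (i:ℕ)=n-1 then 1 else 0))
              * (∑ l, v (y j) l * F (y i) (y j) l))) := by
          rw [step1]
          rw [← Finset.sum_add_distrib]
          refine Finset.sum_congr rfl fun i _ => ?_
          rw [← Finset.sum_add_distrib]
          exact Finset.sum_congr rfl fun j _ => step2 i j
      _ = (𝒰 (y i0) - 𝒰 (y iN))
            + ((∑ l, v (y iN) l * y iN l) - (∑ l, v (y i0) l * y i0 l)) := by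
          rw [← step3, ← step4, ← Finset.sum_add_distrib]
          refine Finset.sum_congr rfl fun i _ => ?_
          rw [← Finset.sum_add_distrib]
      _ = U (y iN) - U (y i0) := by
          rw [h𝒰 (y i0), h𝒰 (y iN)]; ring
  -- source term nonpositive
  have hsrc : (∑ i, h * (w i * (∑ l, v (y i) l * S (y i) l))) ≤ 0 := by
    refine Finset.sum_nonpos fun i _ => ?_
    have := mul_nonpos_of_nonneg_of_nonpos (le_of_lt (hw i)) (hS (y i))
    exact mul_nonpos_of_nonneg_of_nonpos (le_of_lt hh) this
  -- convexity inequality at the inflow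
  have hconv : U (y i0) - (∑ l, v (y i0) l * (y i0 l - y0 l)) ≤ U y0 := by
    have h1 := convex_grad_ineq U hU hdiff (y i0) y0
    rw [hv (y i0) (y0 - y i0)] at h1
    have h2 : (∑ l, v (y i0) l * (y0 - y i0) l)
        = - (∑ l, v (y i0) l * (y i0 l - y0 l)) := by
      rw [← Finset.sum_neg_distrib]
      exact Finset.sum_congr rfl fun l _ => by simp [Pi.sub_apply]; ring
    rw [h2] at h1
    linarith
  -- conclude
  rw [hA] at hglobal
  exact le_of_eq_of_le rfl (by linarith : U (y iN) ≤ U y0)
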